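/- The number of dependency trees t_n = (1/n)·C(3n-2, n-1) satisfies the asymptotic equivalence t_n ~ (1/(√(27π) · n^{3/2})) · (27/4)^n as n → ∞; i.e., the ratio t_n / ((27/4)^n · n^{-3/2} / √(27π)) tends to 1. -/

import Mathlib

open Filter Real
open Topology Stirling

set_option maxHeartbeats 1000000 in
theorem dependency_tree_count_asymptotic :
    Filter.Tendsto
      (fun n : ℕ =>
        ((Nat.choose (3 * n - 2) (n - 1) : ℝ) / n) /
          ((27 / 4) ^ n / (Real.sqrt (27 * Real.pi) * (n : ℝ) ^ ((3 : ℝ) / 2))))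
      Filter.atTop (nhds 1) := by
  have hπ : (0:ℝ) < π := Real.pi_pos
  have hsπ : (0:ℝ) < Real.sqrt π := Real.sqrt_pos.mpr hπ
  have h1n : Tendsto (fun n : ℕ => 1/(n:ℝ)) atTop (𝓝 0) := tendsto_one_div_atTop_nhds_zero_nat
  -- Stirling sequence limits along shifted indices
  have hs3 : Tendsto (fun n : ℕ => stirlingSeq (3*n-2)) atTop (𝓝 (Real.sqrt π)) :=
    tendsto_stirlingSeq_sqrt_pi.comp (tendsto_atTop_atTop.mpr fun b => ⟨b+2, fun n hn => by omega⟩)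
  have hs1 : Tendsto (fun n : ℕ => stirlingSeq (n-1)) atTop (𝓝 (Real.sqrt π)) :=
    tendsto_stirlingSeq_sqrt_pi.comp (tendsto_atTop_atTop.mpr fun b => ⟨b+1, fun n hn => by omega⟩)
  have hs2 : Tendsto (fun n : ℕ => stirlingSeq (2*n-1)) atTop (𝓝 (Real.sqrt π)) :=
    tendsto_stirlingSeq_sqrt_pi.comp (tendsto_atTop_atTop.mpr fun b => ⟨b+1, fun n hn => by omega⟩)
  have hT1 : Tendsto (fun n : ℕ => stirlingSeq (3*n-2) / (stirlingSeq (n-1) * stirlingSeq (2*n-1)))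
      atTop (𝓝 (Real.sqrt π / (Real.sqrt π * Real.sqrt π))) :=
    hs3.div (hs1.mul hs2) (by positivity)
  -- base limits
  have hdiv : ∀ c : ℝ, Tendsto (fun n : ℕ => c * (1/(n:ℝ))) atTop (𝓝 0) := by
    intro c
    have h := h1n.const_mul c
    rwa [mul_zero] at h
  have hb1 : Tendsto (fun n : ℕ => 1 - 2/(3*(n:ℝ))) atTop (𝓝 1) := by
    have h2 : Tendsto (fun n : ℕ => 2/(3*(n:ℝ))) atTop (𝓝 0) :=
      (hdiv (2/3)).congr fun n => by ring
    have h := (tendsto_const_nhds : Tendsto (fun _ : ℕ => (1:ℝ)) atTop (𝓝 1)).sub h2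
    rwa [sub_zero] at h
  have hb2 : Tendsto (fun n : ℕ => 1 - 1/(n:ℝ)) atTop (𝓝 1) := by
    have h := (tendsto_const_nhds : Tendsto (fun _ : ℕ => (1:ℝ)) atTop (𝓝 1)).sub h1n
    rwa [sub_zero] at h
  have hb3 : Tendsto (fun n : ℕ => 1 - 1/(2*(n:ℝ))) atTop (𝓝 1) := by
    have h2 : Tendsto (fun n : ℕ => 1/(2*(n:ℝ))) atTop (𝓝 0) :=
      (hdiv (1/2)).congr fun n => by ring
    have h := (tendsto_const_nhds : Tendsto (fun _ : ℕ => (1:ℝ)) atTop (𝓝 1)).sub h2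
    rwa [sub_zero] at h
  -- exponential-type limits
  have hA' : Tendsto (fun n : ℕ => (1 - 2/(3*(n:ℝ)))^(3*n)) atTop (𝓝 (Real.exp (-2))) := by
    have h := (Real.tendsto_one_add_div_pow_exp (-2)).comp
      (tendsto_atTop_atTop.mpr fun b => ⟨b, fun n hn => le_trans hn (by omega)⟩ :
        Tendsto (fun n : ℕ => 3 * n) atTop atTop)
    refine h.congr fun n => ?_
    simp only [Function.comp_apply]
    push_cast
    congr 1
    ring
  have hB' : Tendsto (fun n : ℕ => (1 - 1/(n:ℝ))^n) atTop (𝓝 (Real.exp (-1))) := by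
    refine (Real.tendsto_one_add_div_pow_exp (-1)).congr fun n => ?_
    congr 1
    ring
  have hC' : Tendsto (fun n : ℕ => (1 - 1/(2*(n:ℝ)))^(2*n)) atTop (𝓝 (Real.exp (-1))) := by
    have h := (Real.tendsto_one_add_div_pow_exp (-1)).comp
      (tendsto_atTop_atTop.mpr fun b => ⟨b, fun n hn => le_trans hn (by omega)⟩ :
        Tendsto (fun n : ℕ => 2 * n) atTop atTop)
    refine h.congr fun n => ?_
    simp only [Function.comp_apply]
    push_cast
    congr 1
    ring
  have hA : Tendsto (fun n : ℕ => (1 - 2/(3*(n:ℝ)))^(3*n-2)) atTop (𝓝 (Real.exp (-2))) := by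
    have h := hA'.div (hb1.pow 2) (by norm_num)
    rw [one_pow, div_one] at h
    refine h.congr' ?_
    filter_upwards [eventually_ge_atTop 1] with n hn
    have hx : (1:ℝ) ≤ n := by exact_mod_cast hn
    have hbpos : (0:ℝ) < 1 - 2/(3*(n:ℝ)) := by
      rw [sub_pos, div_lt_one (by linarith)]; linarith
    rw [pow_sub₀ _ (ne_of_gt hbpos) (by omega : 2 ≤ 3*n), div_eq_mul_inv]
    rfl
  have hB : Tendsto (fun n : ℕ => (1 - 1/(n:ℝ))^(n-1)) atTop (𝓝 (Real.exp (-1))) := by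
    have h := hB'.div (hb2.pow 1) (by norm_num)
    rw [one_pow, div_one] at h
    refine h.congr' ?_
    filter_upwards [eventually_ge_atTop 2] with n hn
    have hx : (2:ℝ) ≤ n := by exact_mod_cast hn
    have hbpos : (0:ℝ) < 1 - 1/(n:ℝ) := by
      rw [sub_pos, div_lt_one (by linarith)]; linarith
    rw [pow_sub₀ _ (ne_of_gt hbpos) (by omega : 1 ≤ n), div_eq_mul_inv]
    rfl
  have hC : Tendsto (fun n : ℕ => (1 - 1/(2*(n:ℝ)))^(2*n-1)) atTop (𝓝 (Real.exp (-1))) := by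
    have h := hC'.div (hb3.pow 1) (by norm_num)
    rw [one_pow, div_one] at h
    refine h.congr' ?_
    filter_upwards [eventually_ge_atTop 1] with n hn
    have hx : (1:ℝ) ≤ n := by exact_mod_cast hn
    have hbpos : (0:ℝ) < 1 - 1/(2*(n:ℝ)) := by
      rw [sub_pos, div_lt_one (by linarith)]; linarith
    rw [pow_sub₀ _ (ne_of_gt hbpos) (by omega : 1 ≤ 2*n), div_eq_mul_inv]
    rfl
  have hU : Tendsto (fun n : ℕ => (1 - 2/(3*(n:ℝ)))^(3*n-2) /
      ((1 - 1/(n:ℝ))^(n-1) * (1 - 1/(2*(n:ℝ)))^(2*n-1))) atTop (𝓝 1) := by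
    have h := hA.div (hB.mul hC) (by positivity)
    have hval : Real.exp (-2) / (Real.exp (-1) * Real.exp (-1)) = 1 := by
      rw [← Real.exp_add, show (-1:ℝ) + -1 = -2 by norm_num, div_self (Real.exp_ne_zero _)]
    rwa [hval] at h
  -- sqrt factor limit
  have hinner : Tendsto (fun n : ℕ =>
      (2*(3-2/(n:ℝ))) * (27*π) / ((2*(1-1/(n:ℝ))) * (2*(2-1/(n:ℝ))))) atTop (𝓝 (81*π/4)) := by
    have h2 : Tendsto (fun n : ℕ => 2/(n:ℝ)) atTop (𝓝 0) :=
      (hdiv 2).congr fun n => by ring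
    have h3 : Tendsto (fun n : ℕ => 3 - 2/(n:ℝ)) atTop (𝓝 3) := by
      have h := (tendsto_const_nhds : Tendsto (fun _ : ℕ => (3:ℝ)) atTop (𝓝 3)).sub h2
      rwa [sub_zero] at h
    have h4 : Tendsto (fun n : ℕ => 2 - 1/(n:ℝ)) atTop (𝓝 2) := by
      have h := (tendsto_const_nhds : Tendsto (fun _ : ℕ => (2:ℝ)) atTop (𝓝 2)).sub h1n
      rwa [sub_zero] at h
    have hnum : Tendsto (fun n : ℕ => (2*(3-2/(n:ℝ))) * (27*π)) atTop (𝓝 ((2*3) * (27*π))) :=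
      (h3.const_mul 2).mul_const (27*π)
    have hden : Tendsto (fun n : ℕ => (2*(1-1/(n:ℝ))) * (2*(2-1/(n:ℝ)))) atTop
        (𝓝 ((2*1) * (2*2))) :=
      (hb2.const_mul 2).mul (h4.const_mul 2)
    have h := hnum.div hden (by norm_num)
    have hv : ((2*3) * (27*π)) / ((2*(1:ℝ)) * (2*2)) = 81*π/4 := by ring
    rwa [hv] at h
  have hW : Tendsto (fun n : ℕ =>
      Real.sqrt (2*(3*(n:ℝ)-2)) * Real.sqrt (27*π) * (n:ℝ)^((3:ℝ)/2) /
        (Real.sqrt (2*((n:ℝ)-1)) * Real.sqrt (2*(2*(n:ℝ)-1)) * n)) atTop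
      (𝓝 (Real.sqrt (81*π/4))) := by
    have h := (Real.continuous_sqrt.tendsto _).comp hinner
    refine h.congr' ?_
    filter_upwards [eventually_ge_atTop 2] with n hn
    have hx : (2:ℝ) ≤ n := by exact_mod_cast hn
    have hx0 : (0:ℝ) < n := by linarith
    simp only [Function.comp_apply]
    have p1 : (0:ℝ) < 3*(n:ℝ)-2 := by linarith
    have p2 : (0:ℝ) < (n:ℝ)-1 := by linarith
    have p3 : (0:ℝ) < 2*(n:ℝ)-1 := by linarith
    have e1 : (0:ℝ) < 1 - 1/(n:ℝ) := by rw [sub_pos, div_lt_one hx0]; linarith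
    have e2 : (0:ℝ) < 2 - 1/(n:ℝ) := by rw [sub_pos, div_lt_iff₀ hx0]; linarith
    have harg : (2*(3-2/(n:ℝ))) * (27*π) / ((2*(1-1/(n:ℝ))) * (2*(2-1/(n:ℝ)))) =
        ((2*(3*(n:ℝ)-2)) * (27*π) * (n:ℝ)) / ((2*((n:ℝ)-1)) * (2*(2*(n:ℝ)-1))) := by
      rw [div_eq_div_iff (by positivity) (by positivity)]
      field_simp
    rw [harg, Real.sqrt_div (by nlinarith [mul_pos (mul_pos p1 hπ) hx0] :
        (0:ℝ) ≤ 2*(3*(n:ℝ)-2) * (27*π) * (n:ℝ)),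
      Real.sqrt_mul (by nlinarith [mul_pos p1 hπ] : (0:ℝ) ≤ 2*(3*(n:ℝ)-2) * (27*π)),
      Real.sqrt_mul (by linarith : (0:ℝ) ≤ 2*(3*(n:ℝ)-2)),
      Real.sqrt_mul (by linarith : (0:ℝ) ≤ 2*((n:ℝ)-1))]
    have h32 : (n:ℝ)^((3:ℝ)/2) = (n:ℝ) * Real.sqrt n := by
      rw [show (3:ℝ)/2 = 1 + 1/2 by norm_num, Real.rpow_add hx0, Real.rpow_one,
        ← Real.sqrt_eq_rpow]
    rw [h32]
    have hq2 : Real.sqrt (2*((n:ℝ)-1)) ≠ 0 := ne_of_gt (Real.sqrt_pos.mpr (by linarith))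
    have hq3 : Real.sqrt (2*(2*(n:ℝ)-1)) ≠ 0 := ne_of_gt (Real.sqrt_pos.mpr (by linarith))
    field_simp
  -- combine the limits
  have hT : Tendsto (fun n : ℕ =>
      (stirlingSeq (3*n-2) / (stirlingSeq (n-1) * stirlingSeq (2*n-1))) *
      (Real.sqrt (2*(3*(n:ℝ)-2)) * Real.sqrt (27*π) * (n:ℝ)^((3:ℝ)/2) /
        (Real.sqrt (2*((n:ℝ)-1)) * Real.sqrt (2*(2*(n:ℝ)-1)) * n)) *
      ((2/9) * ((1 - 2/(3*(n:ℝ)))^(3*n-2) /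
        ((1 - 1/(n:ℝ))^(n-1) * (1 - 1/(2*(n:ℝ)))^(2*n-1))))) atTop
      (𝓝 ((Real.sqrt π / (Real.sqrt π * Real.sqrt π)) * Real.sqrt (81*π/4) * ((2/9) * 1))) :=
    (hT1.mul hW).mul (hU.const_mul (2/9))
  have hval : (Real.sqrt π / (Real.sqrt π * Real.sqrt π)) * Real.sqrt (81*π/4) * ((2/9) * 1)
      = 1 := by
    have h81 : Real.sqrt (81*π/4) = 9/2 * Real.sqrt π := by
      rw [show (81*π/4 : ℝ) = (9/2)^2 * π by ring, Real.sqrt_mul (by positivity),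
        Real.sqrt_sq (by norm_num)]
    have hss : Real.sqrt π * Real.sqrt π = π := Real.mul_self_sqrt (le_of_lt hπ)
    rw [h81, hss]
    field_simp
    nlinarith [hss, Real.sqrt_nonneg π]
  rw [hval] at hT
  -- eventual equality with the original sequence
  refine hT.congr' ?_
  filter_upwards [eventually_ge_atTop 2] with n hn
  have hx2 : (2:ℝ) ≤ (n:ℝ) := by exact_mod_cast hn
  have hx0 : (0:ℝ) < n := by linarith
  have ha : ((3*n-2 : ℕ) : ℝ) = 3*(n:ℝ)-2 := by
    rw [Nat.cast_sub (by omega : 2 ≤ 3*n)]; push_cast; ring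
  have hb : ((n-1 : ℕ) : ℝ) = (n:ℝ)-1 := by
    rw [Nat.cast_sub (by omega : 1 ≤ n)]; push_cast; ring
  have hc : ((2*n-1 : ℕ) : ℝ) = 2*(n:ℝ)-1 := by
    rw [Nat.cast_sub (by omega : 1 ≤ 2*n)]; push_cast; ring
  have hfac : ∀ k : ℕ, 1 ≤ k →
      ((Nat.factorial k) : ℝ) = stirlingSeq k * (Real.sqrt (2*k) * ((k:ℝ)/Real.exp 1)^k) := by
    intro k hk
    have hk' : (0:ℝ) < k := by exact_mod_cast hk
    rw [stirlingSeq, div_mul_cancel₀]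
    exact ne_of_gt (mul_pos (Real.sqrt_pos.mpr (by linarith))
      (pow_pos (div_pos hk' (Real.exp_pos 1)) k))
  have hchoose : ((3*n-2).choose (n-1) : ℝ) = ((Nat.factorial (3*n-2)) : ℝ) /
      (((Nat.factorial (n-1)) : ℝ) * ((Nat.factorial (2*n-1)) : ℝ)) := by
    rw [Nat.cast_choose ℝ (by omega : n-1 ≤ 3*n-2), show 3*n-2-(n-1) = 2*n-1 from by omega]
  rw [hchoose, hfac (3*n-2) (by omega), hfac (n-1) (by omega), hfac (2*n-1) (by omega),
    ha, hb, hc]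
  -- power identities
  have hbc : 3*n-2 = (n-1) + (2*n-1) := by omega
  have hbpos1 : (0:ℝ) < 1 - 2/(3*(n:ℝ)) := by
    rw [sub_pos, div_lt_one (by linarith)]; linarith
  have hbpos2 : (0:ℝ) < 1 - 1/(n:ℝ) := by
    rw [sub_pos, div_lt_one (by linarith)]; linarith
  have hbpos3 : (0:ℝ) < 1 - 1/(2*(n:ℝ)) := by
    rw [sub_pos, div_lt_one (by linarith)]; linarith
  have hAid : (3*(n:ℝ)-2)^(3*n-2) = 3^(3*n-2) * (n:ℝ)^(3*n-2) * (1-2/(3*(n:ℝ)))^(3*n-2) := by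
    rw [← mul_pow, ← mul_pow]
    congr 1
    field_simp
  have hBid : ((n:ℝ)-1)^(n-1) = (n:ℝ)^(n-1) * (1-1/(n:ℝ))^(n-1) := by
    rw [← mul_pow]
    congr 1
    field_simp
  have hCid : (2*(n:ℝ)-1)^(2*n-1) = 2^(2*n-1) * (n:ℝ)^(2*n-1) * (1-1/(2*(n:ℝ)))^(2*n-1) := by
    rw [← mul_pow, ← mul_pow]
    congr 1
    field_simp
  have hE : Real.exp 1 ^ (3*n-2) = Real.exp 1 ^ (n-1) * Real.exp 1 ^ (2*n-1) := by
    rw [hbc, pow_add]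
  have hnn : (n:ℝ)^(3*n-2) = (n:ℝ)^(n-1) * (n:ℝ)^(2*n-1) := by
    rw [hbc, pow_add]
  have h27 : ((27:ℝ)/4)^n = (3^(3*n-2) * 9) / (2^(2*n-1) * 2) := by
    have h3 : (3:ℝ)^(3*n-2) * 9 = 27^n := by
      rw [show (9:ℝ) = 3^2 by norm_num, ← pow_add, show 3*n-2+2 = 3*n from by omega,
        pow_mul]
      norm_num
    have h2 : (2:ℝ)^(2*n-1) * 2 = 4^n := by
      rw [show (4:ℝ)^n = 2^(2*n) by rw [pow_mul]; norm_num, ← pow_succ]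
      congr 1
      omega
    rw [h3, h2, div_pow]
  have hs1' : stirlingSeq (n-1) ≠ 0 := by
    refine ne_of_gt (div_pos ?_ ?_)
    · exact_mod_cast (n-1).factorial_pos
    · have h0 : (0:ℝ) < ((n-1:ℕ):ℝ) := by rw [hb]; linarith
      exact mul_pos (Real.sqrt_pos.mpr (by linarith)) (pow_pos (div_pos h0 (Real.exp_pos 1)) _)
  have hs2' : stirlingSeq (2*n-1) ≠ 0 := by
    refine ne_of_gt (div_pos ?_ ?_)
    · exact_mod_cast (2*n-1).factorial_pos
    · have h0 : (0:ℝ) < ((2*n-1:ℕ):ℝ) := by rw [hc]; linarith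
      exact mul_pos (Real.sqrt_pos.mpr (by linarith)) (pow_pos (div_pos h0 (Real.exp_pos 1)) _)
  have hq2 : Real.sqrt (2*((n:ℝ)-1)) ≠ 0 := ne_of_gt (Real.sqrt_pos.mpr (by linarith))
  have hq3 : Real.sqrt (2*(2*(n:ℝ)-1)) ≠ 0 := ne_of_gt (Real.sqrt_pos.mpr (by linarith))
  have hqπ : Real.sqrt (27*π) ≠ 0 := ne_of_gt (Real.sqrt_pos.mpr (by positivity))
  have hr : (n:ℝ)^((3:ℝ)/2) ≠ 0 := ne_of_gt (Real.rpow_pos_of_pos hx0 _)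
  have hE' : Real.exp 1 ≠ 0 := Real.exp_ne_zero 1
  have hPB : (((n:ℝ)-1)/Real.exp 1)^(n-1) ≠ 0 :=
    pow_ne_zero _ (ne_of_gt (div_pos (by linarith) (Real.exp_pos 1)))
  have hPC : ((2*(n:ℝ)-1)/Real.exp 1)^(2*n-1) ≠ 0 :=
    pow_ne_zero _ (ne_of_gt (div_pos (by linarith) (Real.exp_pos 1)))
  have hWn : ((27:ℝ)/4)^n ≠ 0 := by positivity
  have aux : ∀ u1 u2 u3 e3 e2 xb xc Eb Ec : ℝ, u2 ≠ 0 → u3 ≠ 0 → e3 ≠ 0 → e2 ≠ 0 →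
      xb ≠ 0 → xc ≠ 0 → Eb ≠ 0 → Ec ≠ 0 →
      (e3*(xb*xc)*u1)/(Eb*Ec) / ((xb*u2)/Eb * ((e2*xc*u3)/Ec) * ((e3*9)/(e2*2))) =
        (2/9)*(u1/(u2*u3)) := by
    intro u1 u2 u3 e3 e2 xb xc Eb Ec h1 h2 h3 h4 h5 h6 h7 h8
    field_simp
  have hpow : ((3*(n:ℝ)-2)/Real.exp 1)^(3*n-2) /
      ((((n:ℝ)-1)/Real.exp 1)^(n-1) * ((2*(n:ℝ)-1)/Real.exp 1)^(2*n-1) * ((27:ℝ)/4)^n) =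
      (2/9) * ((1 - 2/(3*(n:ℝ)))^(3*n-2) /
        ((1 - 1/(n:ℝ))^(n-1) * (1 - 1/(2*(n:ℝ)))^(2*n-1))) := by
    rw [div_pow, div_pow, div_pow, hAid, hBid, hCid, hE, hnn, h27]
    exact aux _ _ _ _ _ _ _ _ _ (pow_ne_zero _ (ne_of_gt hbpos2))
      (pow_ne_zero _ (ne_of_gt hbpos3)) (by positivity) (by positivity)
      (pow_ne_zero _ (ne_of_gt hx0)) (pow_ne_zero _ (ne_of_gt hx0))
      (pow_ne_zero _ hE') (pow_ne_zero _ hE')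
  rw [← hpow]
  set W := ((27:ℝ)/4)^n with hWdef
  set PA := ((3*(n:ℝ)-2)/Real.exp 1)^(3*n-2) with hPAdef
  set PB := (((n:ℝ)-1)/Real.exp 1)^(n-1) with hPBdef
  set PC := ((2*(n:ℝ)-1)/Real.exp 1)^(2*n-1) with hPCdef
  set qA := Real.sqrt (2*(3*(n:ℝ)-2)) with hqAdef
  set qB := Real.sqrt (2*((n:ℝ)-1)) with hqBdef
  set qC := Real.sqrt (2*(2*(n:ℝ)-1)) with hqCdef
  set Q := Real.sqrt (27*π) with hQdef
  set r := (n:ℝ)^((3:ℝ)/2) with hrdef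
  have hx' : (n:ℝ) ≠ 0 := ne_of_gt hx0
  field_simp
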